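/- For every polynomial p with complex coefficients of degree strictly less than k, the Lanczos-FA approximation is exact: Q p(T) Qᴴ b = p(A) b. -/

import Mathlib

open Matrix MeasureTheory

/-- The Euclidean 2-norm of a complex vector. -/
noncomputable def norm2 {n : ℕ} (v : Fin n → ℂ) : ℝ :=
  Real.sqrt (∑ i, ‖v i‖ ^ 2)

lemma norm2_ne_zero {n : ℕ} {v : Fin n → ℂ} (hv : v ≠ 0) : norm2 v ≠ 0 := by
  obtain ⟨i, hi⟩ := Function.ne_iff.mp hv
  have hi' : v i ≠ 0 := by simpa using hi
  have h1 : 0 < ‖v i‖ ^ 2 := by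
    have := norm_pos_iff.mpr hi'
    positivity
  have hle : ‖v i‖ ^ 2 ≤ ∑ j, ‖v j‖ ^ 2 :=
    Finset.single_le_sum (f := fun j => ‖v j‖ ^ 2) (fun j _ => by positivity)
      (Finset.mem_univ i)
  have h2 : 0 < norm2 v := Real.sqrt_pos.mpr (lt_of_lt_of_le h1 hle)
  exact ne_of_gt h2

lemma mulVec_sum' {m n : ℕ} {ι : Type*} (s : Finset ι) (M : Matrix (Fin m) (Fin n) ℂ)
    (v : ι → Fin n → ℂ) : M.mulVec (∑ i ∈ s, v i) = ∑ i ∈ s, M.mulVec (v i) := by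
  classical
  induction s using Finset.induction with
  | empty => simp
  | insert _ _ h ih => simp [Finset.sum_insert h, Matrix.mulVec_add, ih]

lemma sum_mulVec' {m n : ℕ} {ι : Type*} (s : Finset ι) (f : ι → Matrix (Fin m) (Fin n) ℂ)
    (v : Fin n → ℂ) : (∑ i ∈ s, f i).mulVec v = ∑ i ∈ s, (f i).mulVec v := by
  classical
  induction s using Finset.induction with
  | empty => simp [Matrix.mulVec, dotProduct]
  | insert _ _ h ih => simp [Finset.sum_insert h, Matrix.add_mulVec, ih]

theorem lanczos_fa_polynomial_exact
    {n k : ℕ} (hn : 0 < n) (hk : 0 < k)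
    (A : Matrix (Fin n) (Fin n) ℂ) (hA : A.IsHermitian)
    (b : Fin n → ℂ) (hb : b ≠ 0)
    (Q : Matrix (Fin n) (Fin k) ℂ) (hQ : Qᴴ * Q = 1)
    (hQb : Q.mulVec (Pi.single (⟨0, hk⟩ : Fin k) 1) = (norm2 b)⁻¹ • b)
    (T : Matrix (Fin k) (Fin k) ℝ) (hTsymm : T.IsSymm)
    (hTtri : ∀ i j : Fin k, (i : ℕ) + 1 < (j : ℕ) ∨ (j : ℕ) + 1 < (i : ℕ) → T i j = 0)
    (hToff : ∀ i j : Fin k, (i : ℕ) + 1 = (j : ℕ) → 0 < T i j)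
    (βk : ℝ) (hβk : 0 < βk)
    (q : Fin n → ℂ) (hq : norm2 q = 1) (hQq : Qᴴ.mulVec q = 0)
    (hAQ : A * Q = Q * T.map Complex.ofReal + (βk : ℂ) •
      Matrix.vecMulVec q (Pi.single (⟨k - 1, Nat.sub_lt hk Nat.one_pos⟩ : Fin k) 1))
    (p : Polynomial ℂ) (hp : p.degree < k) :
    (Q * Polynomial.aeval (T.map Complex.ofReal) p * Qᴴ).mulVec b
      = (Polynomial.aeval A p).mulVec b := by
  classical
  set T' : Matrix (Fin k) (Fin k) ℂ := T.map Complex.ofReal with hT'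
  set e₁ : Fin k → ℂ := Pi.single (⟨0, hk⟩ : Fin k) 1 with he₁
  -- support of T'^j *ᵥ e₁
  have hsupp : ∀ j : ℕ, ∀ i : Fin k, j < (i : ℕ) → ((T' ^ j).mulVec e₁) i = 0 := by
    intro j
    induction j with
    | zero =>
      intro i hi
      simp only [pow_zero, Matrix.one_mulVec, he₁]
      rw [Pi.single_apply]
      rw [if_neg]
      intro h
      rw [h] at hi
      simp at hi
    | succ j ih =>
      intro i hi
      rw [pow_succ', ← Matrix.mulVec_mulVec]
      show ∑ l, T' i l * ((T' ^ j).mulVec e₁) l = 0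
      apply Finset.sum_eq_zero
      intro l _
      by_cases hl : j < (l : ℕ)
      · rw [ih l hl, mul_zero]
      · have : (l : ℕ) + 1 < (i : ℕ) := by omega
        have : T' i l = 0 := by
          simp [hT', Matrix.map_apply, hTtri i l (Or.inr this)]
        rw [this, zero_mul]
  -- main exactness for powers
  have hpow : ∀ j : ℕ, j < k →
      (A ^ j).mulVec (Q.mulVec e₁) = Q.mulVec ((T' ^ j).mulVec e₁) := by
    intro j
    induction j with
    | zero => intro _; simp
    | succ j ih =>
      intro hjk
      have ih' := ih (by omega)
      rw [pow_succ', ← Matrix.mulVec_mulVec, ih', Matrix.mulVec_mulVec, hAQ,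
        Matrix.add_mulVec, Matrix.smul_mulVec]
      have hzero : (Matrix.vecMulVec q
          (Pi.single (⟨k - 1, Nat.sub_lt hk Nat.one_pos⟩ : Fin k) 1)).mulVec
          ((T' ^ j).mulVec e₁) = 0 := by
        funext i
        show ∑ l, Matrix.vecMulVec q _ i l * ((T' ^ j).mulVec e₁) l = 0
        apply Finset.sum_eq_zero
        intro l _
        rw [Matrix.vecMulVec_apply, Pi.single_apply]
        by_cases hl : l = (⟨k - 1, Nat.sub_lt hk Nat.one_pos⟩ : Fin k)
        · have : j < (l : ℕ) := by
            rw [hl]; simp; omega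
          rw [hsupp j l this, mul_zero]
        · rw [if_neg hl, mul_zero, zero_mul]
      rw [hzero, smul_zero, add_zero, ← Matrix.mulVec_mulVec,
        show T' *ᵥ T' ^ j *ᵥ e₁ = T' ^ (j + 1) *ᵥ e₁ from by
          rw [Matrix.mulVec_mulVec, ← pow_succ']]
  -- exactness for the polynomial
  have hnd : p.natDegree < k := by
    by_cases hp0 : p = 0
    · simpa [hp0] using hk
    · exact (Polynomial.natDegree_lt_iff_degree_lt hp0).mpr (by exact_mod_cast hp)
  have hpoly : (Polynomial.aeval A p).mulVec (Q.mulVec e₁)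
      = Q.mulVec ((Polynomial.aeval T' p).mulVec e₁) := by
    rw [Polynomial.aeval_eq_sum_range' hnd A, Polynomial.aeval_eq_sum_range' hnd T']
    rw [sum_mulVec', sum_mulVec', mulVec_sum']
    apply Finset.sum_congr rfl
    intro i hi
    have hik : i < k := Finset.mem_range.mp hi
    rw [Matrix.smul_mulVec, Matrix.smul_mulVec, hpow i hik,
      Matrix.mulVec_smul]
  -- rewrite b
  have hnb : (norm2 b : ℂ) ≠ 0 := by exact_mod_cast norm2_ne_zero hb
  have hbQ : b = (norm2 b : ℂ) • Q.mulVec e₁ := by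
    rw [hQb]
    funext i
    simp only [Pi.smul_apply, Complex.real_smul, smul_eq_mul, Complex.ofReal_inv]
    rw [← mul_assoc, mul_inv_cancel₀ hnb, one_mul]
  have hQhb : Qᴴ.mulVec b = (norm2 b : ℂ) • e₁ := by
    conv_lhs => rw [hbQ]
    rw [Matrix.mulVec_smul, Matrix.mulVec_mulVec, hQ, Matrix.one_mulVec]
  calc (Q * Polynomial.aeval T' p * Qᴴ).mulVec b
      = Q.mulVec ((Polynomial.aeval T' p).mulVec (Qᴴ.mulVec b)) := by
        rw [Matrix.mulVec_mulVec, Matrix.mulVec_mulVec]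
    _ = (norm2 b : ℂ) • Q.mulVec ((Polynomial.aeval T' p).mulVec e₁) := by
        rw [hQhb, Matrix.mulVec_smul, Matrix.mulVec_smul]
    _ = (norm2 b : ℂ) • (Polynomial.aeval A p).mulVec (Q.mulVec e₁) := by rw [hpoly]
    _ = (Polynomial.aeval A p).mulVec b := by
        rw [← Matrix.mulVec_smul, ← hbQ]
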